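/- Let Λ be a finite tree (a finite nonempty connected acyclic simple graph), and let 𝒫 be a partition of the vertex set of Λ into nonempty blocks with the property that for all blocks B, B' ∈ 𝒫 and all vertices u, v ∈ B, u has a neighbor in B' if and only if v has a neighbor in B'. Let Γ_B be the simple graph whose vertices are the blocks of 𝒫, with distinct blocks B, B' adjacent if and only if some vertex of B is adjacent in Λ to some vertex of B'. Then Γ_B is a tree; in particular, Γ_B contains no cycle. -/

import Mathlib

/-- The graph of blocks of the partition of the vertex set of `Λ` given by the fibers of
`c : V → B`: the vertices are the blocks, and distinct blocks `b, b'` are adjacent if and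
only if some vertex of the fiber over `b` is adjacent in `Λ` to some vertex of the fiber
over `b'`. -/
def blockGraphOf {V B : Type} (Λ : SimpleGraph V) (c : V → B) : SimpleGraph B where
  Adj b b' := b ≠ b' ∧ ∃ u v, Λ.Adj u v ∧ c u = b ∧ c v = b'
  symm := by
    constructor
    rintro b b' ⟨hne, u, v, h, hu, hv⟩
    exact ⟨hne.symm, v, u, h.symm, hv, hu⟩
  loopless := by
    constructor
    rintro b ⟨hne, -⟩
    exact hne rfl

namespace BlocksAux

open SimpleGraph Walk

variable {V : Type} {Λ : SimpleGraph V}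

/-- The walk `u n, u (n-1), ..., u 0` built from an infinite adjacency sequence. -/
def walkOf (u : ℕ → V) (hadj : ∀ m, Λ.Adj (u m) (u (m + 1))) : (n : ℕ) → Λ.Walk (u n) (u 0)
  | 0 => Walk.nil
  | n + 1 => Walk.cons (hadj n).symm (walkOf u hadj n)

lemma walkOf_length (u : ℕ → V) (hadj : ∀ m, Λ.Adj (u m) (u (m + 1))) (n : ℕ) :
    (walkOf u hadj n).length = n := by
  induction n with
  | zero => rfl
  | succ n ih => simp [walkOf, ih]

lemma mem_support_walkOf {u : ℕ → V} {hadj : ∀ m, Λ.Adj (u m) (u (m + 1))} {n : ℕ} {x : V}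
    (hx : x ∈ (walkOf u hadj n).support) : ∃ k ≤ n, x = u k := by
  induction n with
  | zero =>
    simp only [walkOf, support_nil, List.mem_singleton] at hx
    exact ⟨0, le_refl _, hx⟩
  | succ n ih =>
    rw [walkOf, support_cons, List.mem_cons] at hx
    rcases hx with h | h
    · exact ⟨n + 1, le_refl _, h⟩
    · obtain ⟨k, hk, hk'⟩ := ih h
      exact ⟨k, Nat.le_succ_of_le hk, hk'⟩

lemma walkOf_isPath (hac : Λ.IsAcyclic) :
    ∀ (n : ℕ) (u : ℕ → V) (hadj : ∀ m, Λ.Adj (u m) (u (m + 1)))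
      (_ : ∀ m, u m ≠ u (m + 2)), (walkOf u hadj n).IsPath := by
  intro n
  induction n using Nat.strong_induction_on with
  | _ n ih =>
    match n with
    | 0 =>
      intro u hadj hnb
      exact IsPath.nil
    | Nat.succ m =>
      intro u hadj hnb
      rw [walkOf]
      refine (ih m (Nat.lt_succ_self m) u hadj hnb).cons ?_
      intro hmem
      obtain ⟨k, hk, heq⟩ := mem_support_walkOf hmem
      -- heq : u (m + 1) = u k
      rcases Nat.lt_or_ge k m with hlt | hge
      · rcases eq_or_lt_of_le (Nat.succ_le_of_lt hlt) with hk1 | hk2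
        · -- k + 1 = m, so u (m+1) = u (k+2)
          apply hnb k
          rw [← hk1] at heq
          exact heq.symm
        · -- k + 2 ≤ m : produce two distinct paths from u m to u k
          obtain ⟨d, rfl⟩ : ∃ d, m = k + d := ⟨m - k, (Nat.add_sub_cancel' hlt.le).symm⟩
          have hd2 : 2 ≤ d := by omega
          have hadj' : ∀ i, Λ.Adj (u (k + i)) (u (k + i + 1)) := fun i => hadj (k + i)
          have hadj'' : ∀ i, Λ.Adj ((fun i => u (k + i)) i) ((fun i => u (k + i)) (i + 1)) :=
            fun i => by simpa [Nat.add_assoc] using hadj' i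
          have hnb'' : ∀ i, (fun i => u (k + i)) i ≠ (fun i => u (k + i)) (i + 2) :=
            fun i => by simpa [Nat.add_assoc] using hnb (k + i)
          have hp1 : (walkOf (fun i => u (k + i)) hadj'' d).IsPath :=
            ih d (by omega) _ hadj'' hnb''
          have hadjE : Λ.Adj (u (k + d)) (u k) := heq ▸ hadj (k + d)
          have hp2 : (Walk.cons hadjE Walk.nil : Λ.Walk (u (k + d)) (u k)).IsPath := by
            rw [cons_isPath_iff]
            refine ⟨IsPath.nil, ?_⟩
            simp only [support_nil, List.mem_singleton]
            exact hadjE.ne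
          have hPeq := hac.path_unique
            (⟨walkOf (fun i => u (k + i)) hadj'' d, hp1⟩ : Λ.Path (u (k + d)) (u k))
            (⟨Walk.cons hadjE Walk.nil, hp2⟩ : Λ.Path (u (k + d)) (u k))
          have hlen := congrArg (fun q : Λ.Path (u (k + d)) (u k) => q.1.length) hPeq
          simp only [walkOf_length, Walk.length_cons, Walk.length_nil] at hlen
          omega
      · -- k = m : u (m+1) = u m contradicts adjacency
        have hkm : k = m := le_antisymm hk hge
        subst hkm
        exact (hadj k).ne' heq

lemma no_infinite_nonbacktracking [Fintype V] (hac : Λ.IsAcyclic) (u : ℕ → V)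
    (hadj : ∀ m, Λ.Adj (u m) (u (m + 1))) (hnb : ∀ m, u m ≠ u (m + 2)) : False := by
  have key : ∀ i d : ℕ, 0 < d → u i ≠ u (i + d) := by
    intro i d hd h
    have hadj'' : ∀ t, Λ.Adj ((fun t => u (i + t)) t) ((fun t => u (i + t)) (t + 1)) :=
      fun t => by simpa [Nat.add_assoc] using hadj (i + t)
    have hnb'' : ∀ t, (fun t => u (i + t)) t ≠ (fun t => u (i + t)) (t + 2) :=
      fun t => by simpa [Nat.add_assoc] using hnb (i + t)
    have hp : (walkOf (fun t => u (i + t)) hadj'' d).IsPath :=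
      walkOf_isPath hac d _ hadj'' hnb''
    have hp' : ((walkOf (fun t => u (i + t)) hadj'' d).copy rfl h).IsPath := by
      rwa [Walk.isPath_copy]
    have := Walk.isPath_iff_eq_nil.mp hp'
    have hlen := congrArg Walk.length this
    rw [Walk.length_copy, walkOf_length] at hlen
    simp only [Walk.length_nil] at hlen
    omega
  have hinj : Function.Injective u := by
    intro i j hij
    rcases lt_trichotomy i j with h | h | h
    · exact absurd (show u i = u (i + (j - i)) by
        rw [Nat.add_sub_cancel' h.le]; exact hij) (key i (j - i) (by omega))
    · exact h
    · exact absurd (show u j = u (j + (i - j)) by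
        rw [Nat.add_sub_cancel' h.le]; exact hij.symm) (key j (i - j) (by omega))
  obtain ⟨a, b, hne, h⟩ := Finite.exists_ne_map_eq_of_infinite u
  exact hne (hinj h)

/-- Relating `getVert` to `support` list indexing. -/
lemma support_getElem? {a b : V} (p : Λ.Walk a b) :
    ∀ i : ℕ, i ≤ p.length → p.support[i]? = some (p.getVert i) := by
  induction p with
  | nil =>
    intro i hi
    have : i = 0 := Nat.le_zero.mp hi
    subst this
    rfl
  | cons h q ih =>
    intro i hi
    match i with
    | 0 => simp [SimpleGraph.Walk.support_cons, SimpleGraph.Walk.getVert_zero]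
    | Nat.succ i =>
      rw [Walk.support_cons]
      simp only [List.getElem?_cons_succ]
      rw [Walk.getVert_cons_succ]
      exact ih i (by simpa using hi)

end BlocksAux

/-- If `Λ` is a finite tree and the partition of its vertex set into the (nonempty) fibers
of the surjection `c : V → B` is equitable — for any two blocks `b, b'` and vertices `u, v`
in the block `b`, `u` has a neighbor in `b'` iff `v` has a neighbor in `b'` — then the graph
of blocks is a tree; in particular, it contains no cycle. -/
theorem blockGraphOf_isTree {V B : Type} [Fintype V]
    (Λ : SimpleGraph V) (hΛ : Λ.IsTree)
    (c : V → B) (hsurj : Function.Surjective c)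
    (hequit : ∀ u v : V, c u = c v → ∀ b : B,
      ((∃ x, Λ.Adj u x ∧ c x = b) ↔ (∃ x, Λ.Adj v x ∧ c x = b))) :
    (blockGraphOf Λ c).IsTree ∧ (blockGraphOf Λ c).IsAcyclic := by
  classical
  obtain ⟨hconnΛ, hacΛ⟩ := hΛ
  -- Acyclicity of the block graph
  have hacB : (blockGraphOf Λ c).IsAcyclic := by
    intro b0 p hp
    set m := p.length with hm
    have hm3 : 3 ≤ m := hp.three_le_length
    -- injectivity of getVert on [0, m)
    have hinj : ∀ i j, i < m → j < m → p.getVert i = p.getVert j → i = j := by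
      intro i j hi hj hij
      -- map 0 ↦ m, else identity; lands in indices of support.tail shifted by 1
      have hnd : p.support.tail.Nodup := hp.2
      have hsupp : p.support = b0 :: p.support.tail := by
        rw [← SimpleGraph.Walk.support_eq_cons]
      have htail : ∀ t : ℕ, 1 ≤ t → t ≤ m → p.support.tail[t - 1]? = some (p.getVert t) := by
        intro t ht1 htm
        have := BlocksAux.support_getElem? p t htm
        rw [hsupp] at this
        rcases Nat.exists_eq_add_of_le ht1 with ⟨s, rfl⟩
        simpa [Nat.add_comm] using this
      have hlen : p.support.tail.length = m := by
        have h := SimpleGraph.Walk.length_support p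
        rw [List.length_tail, h]
        omega
      have hgV : p.getVert m = b0 := by rw [hm]; exact p.getVert_length
      -- define shifted indices
      set i' := if i = 0 then m else i with hi'
      set j' := if j = 0 then m else j with hj'
      have hgi : p.getVert i' = p.getVert i := by
        by_cases h0 : i = 0
        · simp [hi', h0, hgV, SimpleGraph.Walk.getVert_zero]
        · simp [hi', h0]
      have hgj : p.getVert j' = p.getVert j := by
        by_cases h0 : j = 0
        · simp [hj', h0, hgV, SimpleGraph.Walk.getVert_zero]
        · simp [hj', h0]
      have hi'1 : 1 ≤ i' ∧ i' ≤ m := by rw [hi']; split <;> omega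
      have hj'1 : 1 ≤ j' ∧ j' ≤ m := by rw [hj']; split <;> omega
      have h1 := htail i' hi'1.1 hi'1.2
      have h2 := htail j' hj'1.1 hj'1.2
      have heq : p.support.tail[i' - 1]? = p.support.tail[j' - 1]? := by
        rw [h1, h2, hgi, hgj, hij]
      have := (List.getElem?_inj (by omega) hnd).mp heq
      rw [hi', hj'] at this
      split at this <;> split at this <;> omega
    set g : ℕ → B := fun n => p.getVert (n % m) with hg
    have hmod : ∀ n : ℕ, (n + 1) % m = (n % m + 1) % m := by
      intro n
      conv_lhs => rw [Nat.add_mod]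
      rw [Nat.mod_eq_of_lt (show 1 < m by omega)]
    have hgadj : ∀ n, (blockGraphOf Λ c).Adj (g n) (g (n + 1)) := by
      intro n
      have hr : n % m < m := Nat.mod_lt _ (by omega)
      rcases Nat.lt_or_ge (n % m + 1) m with hlt | hge
      · have : (n + 1) % m = n % m + 1 := by rw [hmod, Nat.mod_eq_of_lt hlt]
        rw [hg]
        simp only
        rw [this]
        exact p.adj_getVert_succ (by omega)
      · have hr1 : n % m + 1 = m := by omega
        have : (n + 1) % m = 0 := by rw [hmod, hr1, Nat.mod_self]
        rw [hg]
        simp only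
        rw [this]
        have := p.adj_getVert_succ (i := n % m) (by omega)
        rw [hr1, SimpleGraph.Walk.getVert_length] at this
        rwa [SimpleGraph.Walk.getVert_zero]
    have hgnb : ∀ n, g n ≠ g (n + 2) := by
      intro n hEq
      have hr : n % m < m := Nat.mod_lt _ (by omega)
      have h2 : (n + 2) % m = (n % m + 2) % m := by
        conv_lhs => rw [Nat.add_mod]
        rw [Nat.mod_eq_of_lt (show 2 < m by omega)]
      have hs : (n % m + 2) % m < m := Nat.mod_lt _ (by omega)
      have hre : n % m = (n % m + 2) % m := by
        apply hinj _ _ hr hs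
        rw [hg] at hEq
        simp only at hEq
        rwa [h2] at hEq
      rcases Nat.lt_or_ge (n % m + 2) m with hlt | hge
      · rw [Nat.mod_eq_of_lt hlt] at hre; omega
      · have : (n % m + 2) % m = n % m + 2 - m := by
          rw [Nat.mod_eq_sub_mod hge, Nat.mod_eq_of_lt (by omega)]
        rw [this] at hre; omega
    -- lift the cycle to an infinite non-backtracking walk in Λ
    have step : ∀ (n : ℕ) (x : V), c x = g n → ∃ z, Λ.Adj x z ∧ c z = g (n + 1) := by
      intro n x hx
      obtain ⟨-, a, b', hab, ha, hb'⟩ := hgadj n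
      exact (hequit a x (by rw [ha, hx]) (g (n + 1))).mp ⟨b', hab, hb'⟩
    obtain ⟨x0, hx0⟩ := hsurj (g 0)
    let U : (n : ℕ) → {x : V // c x = g n} :=
      fun n => Nat.rec ⟨x0, hx0⟩
        (fun n p => ⟨(step n p.1 p.2).choose, (step n p.1 p.2).choose_spec.2⟩) n
    have hUadj : ∀ n, Λ.Adj (U n).1 (U (n + 1)).1 := fun n =>
      (step n (U n).1 (U n).2).choose_spec.1
    have hUnb : ∀ n, (U n).1 ≠ (U (n + 2)).1 := by
      intro n h
      exact hgnb n (by rw [← (U n).2, ← (U (n + 2)).2, h])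
    exact BlocksAux.no_infinite_nonbacktracking hacΛ (fun n => (U n).1) hUadj hUnb
  -- Connectivity of the block graph
  have hconnB : (blockGraphOf Λ c).Connected := by
    have hkey : ∀ x y : V, (blockGraphOf Λ c).Reachable (c x) (c y) := by
      intro x y
      obtain ⟨w⟩ := hconnΛ.preconnected x y
      induction w with
      | nil => exact SimpleGraph.Reachable.refl _
      | @cons a b' y h q ih =>
        by_cases hcc : c a = c b'
        · rw [hcc]; exact ih
        · exact (SimpleGraph.Adj.reachable
            (show (blockGraphOf Λ c).Adj (c a) (c b') from ⟨hcc, a, b', h, rfl, rfl⟩)).trans ih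
    obtain ⟨v⟩ := hconnΛ.nonempty
    rw [SimpleGraph.connected_iff]
    refine ⟨?_, ⟨c v⟩⟩
    intro b b'
    obtain ⟨x, rfl⟩ := hsurj b
    obtain ⟨y, rfl⟩ := hsurj b'
    exact hkey x y
  exact ⟨⟨hconnB, hacB⟩, hacB⟩
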